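/- With p_{x,y} and f as above, let h₀ = -(1/2)·(((t-1)x+1)((s-t)x-s) - (s-1)y(s+(s-t+2)x)) / (((t-1)x+1)^2 + (s-1)y((s-1)y+2-2(t-1)x)). If f(x,y) ≠ 0, then p_{x,y}(h₀) = 4(s-1)^2 x y ((x-1)t - (s-1)y)((t-1)x - s(y-1)) / f(x,y). -/
import Mathlib

theorem stmt_8 (s t x y : ℝ)
    (f : ℝ) (hf : f = ((t-1)*x - (s-1)*y)^2 + 2*(t-1)*x + 2*(s-1)*y + 1)
    (hf0 : f ≠ 0)
    (p : ℝ → ℝ)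
    (hp : ∀ h, p h = 4*f*h^2
      + 4*(((t-1)*x+1)*((s-t)*x-s) - (s-1)*y*(s+(s-t+2)*x))*h
      + ((s-t)*x-s)^2 + 4*s*(s-1)*x*y)
    (h₀ : ℝ)
    (hh₀ : h₀ = -(1/2)*(((t-1)*x+1)*((s-t)*x-s) - (s-1)*y*(s+(s-t+2)*x))
      / (((t-1)*x+1)^2 + (s-1)*y*((s-1)*y + 2 - 2*(t-1)*x))) :
    p h₀ = 4*(s-1)^2*x*y*((x-1)*t - (s-1)*y)*((t-1)*x - s*(y-1)) / f := by
  have hd : (((t-1)*x+1)^2 + (s-1)*y*((s-1)*y + 2 - 2*(t-1)*x)) = f := by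
    rw [hf]; ring
  rw [hp, hh₀, hd]
  field_simp
  rw [hf]
  ring
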